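/- arXiv:1008.0286 — 3 statements merged into one kernel-verified Lean document; each statement's English description precedes it below -/
import Mathlib

section
/- Let E ⊆ K[X] and 𝔖 ⊆ TO(M). Let ∼_E be the equivalence relation on MIN_E(𝔖) defined by ≤ ∼_E ≤' if and only if LM_≤(E) = LM_{≤'}(E). Then the quotient space MIN_E(𝔖)/∼_E, with the quotient topology, is discrete. Hence, if 𝔖 is closed in TO(M), then MIN_E(𝔖)/∼_E is finite. -/
/-- A binary relation is a total ordering: antisymmetric, transitive, and total. -/
def IsTotalOrdering {S : Type*} (r : S → S → Prop) : Prop :=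
  (∀ a b, r a b → r b a → a = b) ∧ (∀ a b c, r a b → r b c → r a c) ∧ (∀ a b, r a b ∨ r b a)

/-- The set `TO(S)` of all total orderings on `S`. -/
def TO (S : Type*) : Type _ := {r : S → S → Prop // IsTotalOrdering r}

/-- The topology `𝒰(S)` on `TO(S)`, generated by the subbasis of all sets
`U_{(a,b)} = {≤ ∈ TO(S) : a ≤ b}`. -/
instance TOTopology (S : Type*) : TopologicalSpace (TO S) :=
  TopologicalSpace.generateFrom {U | ∃ a b : S, U = {r : TO S | r.1 a b}}
/-- Monomials of `K[X_1,…,X_t]`, identified with their exponent vectors `ν ∈ ℕ^t`. -/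
-- basic sets open
lemma TO.isOpen_basic {S : Type*} (a b : S) : IsOpen {r : TO S | r.1 a b} :=
  TopologicalSpace.isOpen_generateFrom_of_mem ⟨a, b, rfl⟩

-- compactness
instance TO.compactSpace (S : Type*) : CompactSpace (TO S) := by
  rw [← isCompact_univ_iff, isCompact_iff_ultrafilter_le_nhds]
  intro F _
  set r : S → S → Prop := fun a b => {x : TO S | x.1 a b} ∈ F with hr
  have htot : IsTotalOrdering r := by
    refine ⟨?_, ?_, ?_⟩
    · intro a b hab hba
      obtain ⟨x, hx1, hx2⟩ := F.nonempty_of_mem (F.inter_mem hab hba)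
      exact x.2.1 a b hx1 hx2
    · intro a b c hab hbc
      refine Filter.mem_of_superset (F.inter_mem hab hbc) ?_
      rintro x ⟨h1, h2⟩
      exact x.2.2.1 a b c h1 h2
    · intro a b
      have hu : {x : TO S | x.1 a b} ∪ {x : TO S | x.1 b a} ∈ F := by
        refine Filter.mem_of_superset Filter.univ_mem ?_
        intro x _
        exact x.2.2.2 a b
      exact Ultrafilter.union_mem_iff.1 hu
  refine ⟨⟨r, htot⟩, trivial, ?_⟩
  rw [show (TOTopology S) = TopologicalSpace.generateFrom {U | ∃ a b : S, U = {x : TO S | x.1 a b}} from rfl]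
  refine le_of_le_of_eq ?_ (TopologicalSpace.nhds_generateFrom).symm
  refine le_iInf₂ ?_
  rintro s ⟨hmem, a, b, rfl⟩
  exact Filter.le_principal_iff.2 hmem

abbrev Mon (t : ℕ) := Fin t →₀ ℕ

/-- `LM` is a leading-monomial function: for each total ordering `r` on monomials and each
nonzero polynomial `p`, `LM r p` is the `r`-maximal element of the support of `p`. -/
def IsLM (K : Type*) [Field K] (t : ℕ)
    (LM : TO (Mon t) → MvPolynomial (Fin t) K → Mon t) : Prop :=
  ∀ (r : TO (Mon t)) (p : MvPolynomial (Fin t) K), p ≠ 0 →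
    LM r p ∈ p.support ∧ ∀ m ∈ p.support, r.1 m (LM r p)

/-- The leading monomial ideal `LM_≤(E)` of a subset `E ⊆ K[X]`: the ideal generated by the
leading monomials of the nonzero elements of `E`. -/
noncomputable def LMideal (K : Type*) [Field K] (t : ℕ)
    (LM : TO (Mon t) → MvPolynomial (Fin t) K → Mon t)
    (r : TO (Mon t)) (E : Set (MvPolynomial (Fin t) K)) : Ideal (MvPolynomial (Fin t) K) :=
  Ideal.span {q | ∃ e ∈ E, e ≠ 0 ∧ q = MvPolynomial.monomial (LM r e) (1 : K)}

/-- Key lemma: every ordering has an open neighborhood on which the leading ideal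
can only grow. -/
lemma key_nbhd (K : Type*) [Field K] (t : ℕ)
    (LM : TO (Mon t) → MvPolynomial (Fin t) K → Mon t) (hLM : IsLM K t LM)
    (E : Set (MvPolynomial (Fin t) K)) (r : TO (Mon t)) :
    ∃ V : Set (TO (Mon t)), IsOpen V ∧ r ∈ V ∧
      ∀ r' ∈ V, LMideal K t LM r E ≤ LMideal K t LM r' E := by
  classical
  set G : Set (MvPolynomial (Fin t) K) :=
    {q | ∃ e ∈ E, e ≠ 0 ∧ q = MvPolynomial.monomial (LM r e) (1 : K)} with hG
  have hfg : (Ideal.span G).FG := IsNoetherian.noetherian _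
  -- get a finite subset U of G with the same span
  obtain ⟨T, hT⟩ := hfg
  have hsub : ∀ x ∈ T, ∃ U : Finset (MvPolynomial (Fin t) K),
      ↑U ⊆ G ∧ x ∈ Ideal.span (U : Set (MvPolynomial (Fin t) K)) := by
    intro x hx
    have : x ∈ Ideal.span G := by
      rw [← hT]; exact Ideal.subset_span hx
    exact Submodule.mem_span_finite_of_mem_span this
  choose! u hu1 hu2 using hsub
  set U : Finset (MvPolynomial (Fin t) K) := T.biUnion u with hUdef
  have hUG : (U : Set (MvPolynomial (Fin t) K)) ⊆ G := by
    intro x hx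
    simp only [hUdef, Finset.coe_biUnion, Set.mem_iUnion] at hx
    obtain ⟨i, hi, hxi⟩ := hx
    exact hu1 i hi hxi
  have hspanU : Ideal.span (U : Set (MvPolynomial (Fin t) K)) = Ideal.span G := by
    refine le_antisymm (Ideal.span_mono hUG) ?_
    rw [← hT, Ideal.span_le]
    intro x hx
    refine Submodule.span_mono ?_ (hu2 x hx)
    intro y hy
    simp only [hUdef, Finset.coe_biUnion, Set.mem_iUnion]
    exact ⟨x, hx, hy⟩
  -- choose witnesses
  have hUw : ∀ q ∈ U, ∃ e, e ∈ E ∧ e ≠ 0 ∧ q = MvPolynomial.monomial (LM r e) (1 : K) := by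
    intro q hq
    obtain ⟨e, he, hne, hqe⟩ := hUG hq
    exact ⟨e, he, hne, hqe⟩
  choose! f hfE hfne hfq using hUw
  -- define V
  set V : Set (TO (Mon t)) :=
    ⋂ q ∈ U, ⋂ m ∈ (f q).support, {x : TO (Mon t) | x.1 m (LM r (f q))} with hV
  refine ⟨V, ?_, ?_, ?_⟩
  · refine isOpen_biInter_finset fun q hq => ?_
    refine isOpen_biInter_finset fun m hm => ?_
    exact TO.isOpen_basic m (LM r (f q))
  · simp only [hV, Set.mem_iInter]
    intro q hq m hm
    exact (hLM r (f q) (hfne q hq)).2 m hm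
  · intro r' hr'
    have hLMeq : ∀ q ∈ U, LM r' (f q) = LM r (f q) := by
      intro q hq
      have hp := hfne q hq
      have h1 := hLM r' (f q) hp
      have h2 := hLM r (f q) hp
      simp only [hV, Set.mem_iInter] at hr'
      have hab : r'.1 (LM r' (f q)) (LM r (f q)) := hr' q hq _ h1.1
      have hba : r'.1 (LM r (f q)) (LM r' (f q)) := h1.2 _ h2.1
      exact r'.2.1 _ _ hab hba
    show Ideal.span G ≤ LMideal K t LM r' E
    rw [← hspanU, Ideal.span_le]
    intro q hq
    have : q = MvPolynomial.monomial (LM r' (f q)) (1 : K) := by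
      rw [hLMeq q hq]; exact hfq q hq
    exact Ideal.subset_span ⟨f q, hfE q hq, hfne q hq, this⟩

/-- `MIN_E(𝔖)`: the set of orderings `≤ ∈ 𝔖` such that `LM_≤(E)` is minimal with respect to
inclusion among the leading monomial ideals `{LM_≤'(E) : ≤' ∈ 𝔖}`. -/
def MINset (K : Type*) [Field K] (t : ℕ)
    (LM : TO (Mon t) → MvPolynomial (Fin t) K → Mon t)
    (E : Set (MvPolynomial (Fin t) K)) (S : Set (TO (Mon t))) : Set (TO (Mon t)) :=
  {r | r ∈ S ∧ ∀ r' ∈ S, LMideal K t LM r' E ≤ LMideal K t LM r E →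
    LMideal K t LM r' E = LMideal K t LM r E}

/-- The equivalence relation `∼_E` on `MIN_E(𝔖)`: `≤ ∼_E ≤'` iff `LM_≤(E) = LM_{≤'}(E)`. -/
def minSetoid (K : Type*) [Field K] (t : ℕ)
    (LM : TO (Mon t) → MvPolynomial (Fin t) K → Mon t)
    (E : Set (MvPolynomial (Fin t) K)) (S : Set (TO (Mon t))) :
    Setoid ↥(MINset K t LM E S) :=
  ⟨fun x y => LMideal K t LM x.1 E = LMideal K t LM y.1 E,
   ⟨fun _ => rfl, fun h => h.symm, fun h h' => h.trans h'⟩⟩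

/-- The quotient space `MIN_E(𝔖)/∼_E` (with the quotient topology) is discrete; hence, if `𝔖`
is closed in `TO(M)`, it is finite. -/
theorem minQuotient_discrete_finite (K : Type*) [Field K] (t : ℕ) (ht : 1 ≤ t)
    (LM : TO (Mon t) → MvPolynomial (Fin t) K → Mon t) (hLM : IsLM K t LM)
    (E : Set (MvPolynomial (Fin t) K)) (S : Set (TO (Mon t))) :
    DiscreteTopology (Quotient (minSetoid K t LM E S)) ∧
    (IsClosed S → Finite (Quotient (minSetoid K t LM E S))) := by
  classical
  letI := minSetoid K t LM E S
  constructor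
  · -- discreteness
    refine discreteTopology_iff_isOpen_singleton.2 fun q => ?_
    obtain ⟨x, rfl⟩ := Quotient.exists_rep q
    rw [← isQuotientMap_quotient_mk'.isOpen_preimage]
    rw [isOpen_iff_forall_mem_open]
    intro y hy
    obtain ⟨V, hVo, hVmem, hVle⟩ := key_nbhd K t LM hLM E y.1
    refine ⟨Subtype.val ⁻¹' V, ?_, hVo.preimage continuous_subtype_val, hVmem⟩
    intro z hz
    have hle : LMideal K t LM y.1 E ≤ LMideal K t LM z.1 E := hVle z.1 hz
    have heq : LMideal K t LM y.1 E = LMideal K t LM z.1 E := z.2.2 y.1 y.2.1 hle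
    have : Quotient.mk' z = Quotient.mk' y := Quotient.sound heq.symm
    simpa [this] using hy
  · -- finiteness
    intro hS
    have hco : IsCompact S := hS.isCompact
    choose V hVo hVmem hVle using fun r : TO (Mon t) => key_nbhd K t LM hLM E r
    obtain ⟨T, hT⟩ := hco.elim_finite_subcover (fun i : ↥S => V i.1)
      (fun i => hVo i.1) (fun s hs => Set.mem_iUnion.2 ⟨⟨s, hs⟩, hVmem s⟩)
    set I : Set (Ideal (MvPolynomial (Fin t) K)) :=
      (fun i : ↥S => LMideal K t LM i.1 E) '' ↑T with hI
    have hIfin : I.Finite := T.finite_toSet.image _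
    set g : Quotient (minSetoid K t LM E S) → Ideal (MvPolynomial (Fin t) K) :=
      Quotient.lift (fun x : ↥(MINset K t LM E S) => LMideal K t LM x.1 E)
        (fun a b h => h) with hg
    have hginj : Function.Injective g := by
      intro q1 q2 h
      obtain ⟨a, rfl⟩ := Quotient.exists_rep q1
      obtain ⟨b, rfl⟩ := Quotient.exists_rep q2
      exact Quotient.sound h
    have hrange : ∀ q, g q ∈ I := by
      intro q
      obtain ⟨x, rfl⟩ := Quotient.exists_rep q
      obtain ⟨i, hiT, hxV⟩ := Set.mem_iUnion₂.1 (hT x.2.1)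
      have hle : LMideal K t LM i.1 E ≤ LMideal K t LM x.1 E := hVle i.1 x.1 hxV
      have heq : LMideal K t LM i.1 E = LMideal K t LM x.1 E := x.2.2 i.1 i.2 hle
      exact ⟨i, hiT, heq⟩
    have : Finite ↥I := hIfin
    exact Finite.of_injective (fun q => (⟨g q, hrange q⟩ : ↥I))
      (fun a b h => hginj (congrArg Subtype.val h))
end

section
/- The set CO(M) of compatible orderings of K[X] is a closed subset of TO(M), and hence CO(M) is compact. -/
/-- `CO(M)`: the set of compatible (semigroup) orderings on the monomials of `K[X]`, i.e.
total orderings `≤` with `X^υ ≤ X^ν → X^{υ+γ} ≤ X^{ν+γ}` for all exponent vectors. -/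
def COset (t : ℕ) : Set (TO (Mon t)) :=
  {r | ∀ υ ν γ : Mon t, r.1 υ ν → r.1 (υ + γ) (ν + γ)}

section aux
variable {S : Type*}

lemma TO_refl (r : TO S) (a : S) : r.1 a a := (r.2.2.2 a a).elim id id

lemma isOpen_U (a b : S) : IsOpen {r : TO S | r.1 a b} :=
  TopologicalSpace.GenerateOpen.basic _ ⟨a, b, rfl⟩

lemma isClosed_U (a b : S) : IsClosed {r : TO S | r.1 a b} := by
  rw [← isOpen_compl_iff]
  by_cases h : a = b
  · have : {r : TO S | r.1 a b}ᶜ = ∅ := by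
      ext r; simp [h, TO_refl r b]
    rw [this]; exact isOpen_empty
  · have : {r : TO S | r.1 a b}ᶜ = {r : TO S | r.1 b a} := by
      ext r
      simp only [Set.mem_compl_iff, Set.mem_setOf_eq]
      constructor
      · intro hn; exact (r.2.2.2 a b).resolve_left hn
      · intro hba hab; exact h (r.2.1 a b hab hba)
    rw [this]; exact isOpen_U b a

/-- Boolean total orderings. -/
def BT (S : Type*) : Set (S → S → Bool) :=
  {f | (∀ a b, f a b = true → f b a = true → a = b) ∧
    (∀ a b c, f a b = true → f b c = true → f a c = true) ∧
    (∀ a b, f a b = true ∨ f b a = true)}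

lemma isClopen_coord (a b : S) : IsClopen {f : S → S → Bool | f a b = true} := by
  have hc : Continuous (fun f : S → S → Bool => f a b) :=
    (continuous_apply b).comp (continuous_apply a)
  exact (isClopen_discrete {true}).preimage hc

lemma isClosed_BT : IsClosed (BT S) := by
  have h1 : IsClosed {f : S → S → Bool | ∀ a b, f a b = true → f b a = true → a = b} := by
    have : {f : S → S → Bool | ∀ a b, f a b = true → f b a = true → a = b} =
        ⋂ (a : S) (b : S), {f | f a b = true → f b a = true → a = b} := by
      ext f; simp
    rw [this]
    refine isClosed_iInter fun a => isClosed_iInter fun b => ?_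
    by_cases h : a = b
    · have : {f : S → S → Bool | f a b = true → f b a = true → a = b} = Set.univ := by
        ext f; simp [h]
      rw [this]; exact isClosed_univ
    · have : {f : S → S → Bool | f a b = true → f b a = true → a = b} =
          ({f | f a b = true} ∩ {f | f b a = true})ᶜ := by
        ext f; simp only [Set.mem_setOf_eq, Set.mem_compl_iff, Set.mem_inter_iff]; tauto
      rw [this]
      exact (((isClopen_coord a b).2).inter (isClopen_coord b a).2).isClosed_compl
  have h2 : IsClosed {f : S → S → Bool | ∀ a b c, f a b = true → f b c = true → f a c = true} := by
    have : {f : S → S → Bool | ∀ a b c, f a b = true → f b c = true → f a c = true} =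
        ⋂ (a : S) (b : S) (c : S),
          ({f | f a b = true} ∩ {f | f b c = true})ᶜ ∪ {f | f a c = true} := by
      ext f
      simp only [Set.mem_setOf_eq, Set.mem_iInter, Set.mem_union, Set.mem_compl_iff,
        Set.mem_inter_iff]
      constructor
      · intro h a b c; specialize h a b c; tauto
      · intro h a b c; specialize h a b c; tauto
    rw [this]
    refine isClosed_iInter fun a => isClosed_iInter fun b => isClosed_iInter fun c => ?_
    exact IsClosed.union (((isClopen_coord a b).2).inter (isClopen_coord b c).2).isClosed_compl
      (isClopen_coord a c).1
  have h3 : IsClosed {f : S → S → Bool | ∀ a b, f a b = true ∨ f b a = true} := by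
    have : {f : S → S → Bool | ∀ a b, f a b = true ∨ f b a = true} =
        ⋂ (a : S) (b : S), {f | f a b = true} ∪ {f | f b a = true} := by
      ext f; simp
    rw [this]
    exact isClosed_iInter fun a => isClosed_iInter fun b =>
      (isClopen_coord a b).1.union (isClopen_coord b a).1
  have : BT S = _ ∩ (_ ∩ _) := rfl
  exact h1.inter (h2.inter h3)

/-- The map from boolean total orderings to `TO S`. -/
def gmap (f : BT S) : TO S :=
  ⟨fun a b => f.1 a b = true, f.2.1, f.2.2.1, f.2.2.2⟩

lemma continuous_gmap : Continuous (gmap (S := S)) := by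
  apply continuous_generateFrom_iff.mpr
  rintro U ⟨a, b, rfl⟩
  have : gmap (S := S) ⁻¹' {r : TO S | r.1 a b} = {f : BT S | f.1 a b = true} := rfl
  rw [this]
  exact (isClopen_coord a b).2.preimage continuous_subtype_val

lemma surjective_gmap : Function.Surjective (gmap (S := S)) := by
  classical
  intro r
  refine ⟨⟨fun a b => decide (r.1 a b), ?_, ?_, ?_⟩, ?_⟩
  · intro a b hab hba
    exact r.2.1 a b (by simpa using hab) (by simpa using hba)
  · intro a b c hab hbc
    simp only [decide_eq_true_eq] at *
    exact r.2.2.1 a b c hab hbc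
  · intro a b
    simp only [decide_eq_true_eq]
    exact r.2.2.2 a b
  · apply Subtype.ext
    funext a b
    exact propext (by simp [gmap])

instance compactSpace_TO : CompactSpace (TO S) := by
  have hBT : IsCompact (BT S) := isClosed_BT.isCompact
  have : CompactSpace (BT S) := isCompact_iff_compactSpace.mp hBT
  have hr : IsCompact (Set.range (gmap (S := S))) := isCompact_range continuous_gmap
  rw [Set.range_eq_univ.mpr surjective_gmap] at hr
  exact ⟨hr⟩

end aux

/-- `CO(M)` is a closed subset of `TO(M)`, and hence compact. -/
theorem COset_isClosed_isCompact (t : ℕ) (ht : 1 ≤ t) :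
    IsClosed (COset t) ∧ IsCompact (COset t) := by
  have hclosed : IsClosed (COset t) := by
    have : COset t = ⋂ (υ : Mon t) (ν : Mon t) (γ : Mon t),
        {r : TO (Mon t) | r.1 υ ν}ᶜ ∪ {r : TO (Mon t) | r.1 (υ + γ) (ν + γ)} := by
      ext r
      simp only [COset, Set.mem_setOf_eq, Set.mem_iInter, Set.mem_union, Set.mem_compl_iff]
      constructor
      · intro h υ ν γ; specialize h υ ν γ; tauto
      · intro h υ ν γ; specialize h υ ν γ; tauto
    rw [this]
    exact isClosed_iInter fun υ => isClosed_iInter fun ν => isClosed_iInter fun γ =>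
      (isOpen_U υ ν).isClosed_compl.union (isClosed_U _ _)
  exact ⟨hclosed, hclosed.isCompact⟩
end

section
/- Let 𝔗 be a set of total well-orderings on N that is closed in TO(N), assume A is multiplicative on 𝔗, and let L be a left ideal of A. Then every leading monomial ideal of L from 𝔗 is minimal among them with respect to inclusion, and the set {LM_≺(L) : ≺ ∈ 𝔗} is finite; that is, L admits at most finitely many distinct leading monomial ideals from 𝔗. -/
/- `A` is an associative (not necessarily commutative) `K`-algebra and
`Φ : A ≃ₗ[K] K[X_1,…,X_t]` a `K`-module isomorphism, so `N = Φ⁻¹(M)` is a `K`-basis of `A`.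
A total ordering `≺` on `N` is identified, via the bijection induced by `Φ`, with a total
ordering on the monomials of `K[X]`, i.e. on exponent vectors `Mon t`. -/

/-- The leading monomial ideal `LM_≺(H)` of a subset `H ⊆ A`: the ideal of `K[X]` generated by
the leading monomials (the `≺`-maximal monomials of the support of `Φ(h)`) of the nonzero
elements `h ∈ H`. -/
noncomputable def LMAideal (K A : Type*) [Field K] [Ring A] [Algebra K A] (t : ℕ)
    (Φ : A ≃ₗ[K] MvPolynomial (Fin t) K)
    (LM : TO (Mon t) → MvPolynomial (Fin t) K → Mon t)
    (r : TO (Mon t)) (H : Set A) : Ideal (MvPolynomial (Fin t) K) :=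
  Ideal.span {q | ∃ h ∈ H, h ≠ 0 ∧ q = MvPolynomial.monomial (LM r (Φ h)) (1 : K)}

/-- `A` is multiplicative on a set `𝔗` of total orderings: `A` is a domain and
`LM_≺(a·b) = LM_≺(a)·LM_≺(b)` (i.e. addition of exponent vectors) for all nonzero
`a, b ∈ A` and all `≺ ∈ 𝔗`. -/
def MultOn (K A : Type*) [Field K] [Ring A] [Algebra K A] (t : ℕ)
    (Φ : A ≃ₗ[K] MvPolynomial (Fin t) K)
    (LM : TO (Mon t) → MvPolynomial (Fin t) K → Mon t)
    (T : Set (TO (Mon t))) : Prop :=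
  (∀ a b : A, a ≠ 0 → b ≠ 0 → a * b ≠ 0) ∧
  (∀ r ∈ T, ∀ a b : A, a ≠ 0 → b ≠ 0 → LM r (Φ (a * b)) = LM r (Φ a) + LM r (Φ b))

/-- A total ordering is a (total) well-ordering: every nonempty subset has a minimum. -/
def IsWO {S : Type*} (r : TO S) : Prop :=
  ∀ T : Set S, T.Nonempty → ∃ a ∈ T, ∀ b ∈ T, r.1 a b

noncomputable def toBoolFun {S : Type*} (r : TO S) : S × S → Bool :=
  fun p => @decide (r.1 p.1 p.2) (Classical.propDecidable _)

lemma toBoolFun_eq_true_iff {S : Type*} (r : TO S) (p : S × S) :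
    toBoolFun r p = true ↔ r.1 p.1 p.2 := by
  simp [toBoolFun]

lemma exists_open_preimage {S : Type*} (U : Set (TO S)) (hU : IsOpen U) :
    ∃ W : Set (S × S → Bool), IsOpen W ∧ U = toBoolFun ⁻¹' W := by
  induction hU with
  | basic V hV =>
    obtain ⟨a, b, rfl⟩ := hV
    refine ⟨(fun e => e (a, b)) ⁻¹' {true}, (continuous_apply (a, b)).isOpen_preimage _ (isOpen_discrete _), ?_⟩
    ext r
    simp [toBoolFun_eq_true_iff r (a, b)]
  | univ => exact ⟨Set.univ, isOpen_univ, by simp⟩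
  | inter V₁ V₂ _ _ ih₁ ih₂ =>
    obtain ⟨W₁, hW₁, rfl⟩ := ih₁; obtain ⟨W₂, hW₂, rfl⟩ := ih₂
    exact ⟨W₁ ∩ W₂, hW₁.inter hW₂, rfl⟩
  | sUnion 𝒮 _ ih =>
    choose W hWo hWe using ih
    refine ⟨⋃ (V : Set (TO S)) (h : V ∈ 𝒮), W V h, isOpen_iUnion fun V => isOpen_iUnion fun h => hWo V h, ?_⟩
    ext r
    simp only [Set.sUnion_eq_biUnion, Set.mem_iUnion, Set.mem_preimage]
    constructor
    · rintro ⟨V, hV, hr⟩; rw [hWe V hV] at hr; exact ⟨V, hV, hr⟩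
    · rintro ⟨V, hV, hr⟩; refine ⟨V, hV, ?_⟩; rw [hWe V hV]; exact hr

lemma isClosed_range_toBoolFun {S : Type*} :
    IsClosed (Set.range (toBoolFun (S := S))) := by
  have hrange : Set.range (toBoolFun (S := S)) =
      (⋂ (a : S) (b : S), {e : S × S → Bool | e (a, b) = true → e (b, a) = true → a = b}) ∩
      ((⋂ (a : S) (b : S) (c : S),
        {e : S × S → Bool | e (a, b) = true → e (b, c) = true → e (a, c) = true}) ∩
      (⋂ (a : S) (b : S), {e : S × S → Bool | e (a, b) = true ∨ e (b, a) = true})) := by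
    ext e
    simp only [Set.mem_range, Set.mem_inter_iff, Set.mem_iInter, Set.mem_setOf_eq]
    constructor
    · rintro ⟨r, rfl⟩
      simp only [toBoolFun_eq_true_iff]
      exact ⟨r.2.1, r.2.2.1, r.2.2.2⟩
    · rintro ⟨h1, h2, h3⟩
      refine ⟨⟨fun a b => e (a, b) = true, h1, h2, h3⟩, ?_⟩
      funext p
      rcases p with ⟨a, b⟩
      by_cases h : e (a, b) = true
      · simp [toBoolFun, h]
      · simp only [toBoolFun]; simp only [Bool.not_eq_true] at h; simp [h]
  rw [hrange]
  have key : ∀ (P : Bool → Bool → Prop) (a b : S),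
      IsClosed {e : S × S → Bool | P (e (a, b)) (e (b, a))} := by
    intro P a b
    have : {e : S × S → Bool | P (e (a, b)) (e (b, a))} =
        (fun e : S × S → Bool => (e (a, b), e (b, a))) ⁻¹' {q | P q.1 q.2} := rfl
    rw [this]
    exact (isClosed_discrete _).preimage ((continuous_apply (a, b)).prodMk (continuous_apply (b, a)))
  have key3 : ∀ (P : Bool → Bool → Bool → Prop) (a b c : S),
      IsClosed {e : S × S → Bool | P (e (a, b)) (e (b, c)) (e (a, c))} := by
    intro P a b c
    have : {e : S × S → Bool | P (e (a, b)) (e (b, c)) (e (a, c))} =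
        (fun e : S × S → Bool => (e (a, b), e (b, c), e (a, c))) ⁻¹' {q | P q.1 q.2.1 q.2.2} := rfl
    rw [this]
    exact (isClosed_discrete _).preimage
      ((continuous_apply (a, b)).prodMk ((continuous_apply (b, c)).prodMk (continuous_apply (a, c))))
  refine IsClosed.inter ?_ (IsClosed.inter ?_ ?_)
  · exact isClosed_iInter fun a => isClosed_iInter fun b =>
      key (fun x y => x = true → y = true → a = b) a b
  · exact isClosed_iInter fun a => isClosed_iInter fun b => isClosed_iInter fun c =>
      key3 (fun x y z => x = true → y = true → z = true) a b c
  · exact isClosed_iInter fun a => isClosed_iInter fun b =>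
      key (fun x y => x = true ∨ y = true) a b

lemma isCompact_image_toBoolFun {S : Type*} {T : Set (TO S)} (hT : IsClosed T) :
    IsCompact (toBoolFun '' T) := by
  obtain ⟨W, hWo, hWe⟩ := exists_open_preimage _ hT.isOpen_compl
  have himg : toBoolFun '' T = Set.range (toBoolFun (S := S)) ∩ Wᶜ := by
    ext e
    constructor
    · rintro ⟨r, hr, rfl⟩
      refine ⟨⟨r, rfl⟩, fun hW => ?_⟩
      have h1 : r ∈ toBoolFun ⁻¹' W := hW
      rw [← hWe] at h1
      exact h1 hr
    · rintro ⟨⟨r, rfl⟩, hW⟩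
      refine ⟨r, ?_, rfl⟩
      by_contra hr
      have h1 : r ∈ toBoolFun ⁻¹' W := by rw [← hWe]; exact hr
      exact hW h1
  rw [himg]
  exact ((isClosed_range_toBoolFun).inter (isClosed_compl_iff.mpr hWo)).isCompact


open MvPolynomial

section Alg
variable (K A : Type*) [Field K] [Ring A] [Algebra K A] (t : ℕ)
    (Φ : A ≃ₗ[K] MvPolynomial (Fin t) K)
    (LM : TO (Mon t) → MvPolynomial (Fin t) K → Mon t)
    (r : TO (Mon t)) (L : Submodule A A)

/-- `m` is reducible w.r.t. `r` and `L`. -/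
def RedM (m : Mon t) : Prop := ∃ g ∈ L, g ≠ 0 ∧ LM r (Φ g) ≤ m

lemma LMAideal_eq_span :
    LMAideal K A t Φ LM r (L : Set A) =
      Ideal.span ((fun s => monomial s (1 : K)) ''
        {s | ∃ h ∈ L, h ≠ 0 ∧ s = LM r (Φ h)}) := by
  unfold LMAideal
  congr 1
  ext q
  constructor
  · rintro ⟨h, hh, hne, rfl⟩; exact ⟨LM r (Φ h), ⟨h, hh, hne, rfl⟩, rfl⟩
  · rintro ⟨s, ⟨h, hh, hne, rfl⟩, rfl⟩; exact ⟨h, hh, hne, rfl⟩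

lemma mem_LMAideal_iff (p : MvPolynomial (Fin t) K) :
    p ∈ LMAideal K A t Φ LM r (L : Set A) ↔ ∀ m ∈ p.support, RedM K A t Φ LM r L m := by
  rw [LMAideal_eq_span, mem_ideal_span_monomial_image]
  constructor
  · intro H m hm
    obtain ⟨s, ⟨h, hh, hne, rfl⟩, hle⟩ := H m hm
    exact ⟨h, hh, hne, hle⟩
  · intro H m hm
    obtain ⟨g, hg, hne, hle⟩ := H m hm
    exact ⟨LM r (Φ g), ⟨g, hg, hne, rfl⟩, hle⟩

variable {K A t Φ LM r L} in
lemma redM_mono {m m' : Mon t} (h : RedM K A t Φ LM r L m) (hle : m ≤ m') :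
    RedM K A t Φ LM r L m' := by
  obtain ⟨g, hg, hne, hle'⟩ := h
  exact ⟨g, hg, hne, hle'.trans hle⟩

variable {K A t Φ LM r L} in
/-- Every element of `A` splits as an element of `L` plus an element whose
monomials are all irreducible. -/
lemma reduce (hLM : IsLM K t LM) {T : Set (TO (Mon t))}
    (hmult : MultOn K A t Φ LM T) (hrT : r ∈ T) (hWO : IsWO r) (a : A) :
    ∃ l ∈ L, ∃ b : A, a = l + b ∧ ∀ m ∈ (Φ b).support, ¬ RedM K A t Φ LM r L m := by
  set P : A → Prop := fun a =>
    ∃ l ∈ L, ∃ b : A, a = l + b ∧ ∀ m ∈ (Φ b).support, ¬ RedM K A t Φ LM r L m with hP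
  classical
  by_contra hcon
  have hP0 : ∀ x : A, x = 0 → P x := by
    rintro x rfl
    exact ⟨0, L.zero_mem, 0, by simp, by simp⟩
  set Bad : Set (Mon t) := {m | ∃ x : A, ¬ P x ∧ x ≠ 0 ∧ LM r (Φ x) = m} with hBad
  have hBadne : Bad.Nonempty := by
    refine ⟨LM r (Φ a), a, hcon, ?_, rfl⟩
    intro h; exact hcon (hP0 a h)
  obtain ⟨μ, hμBad, hμmin⟩ := hWO Bad hBadne
  obtain ⟨x, hPx, hxne, hlmx⟩ := hμBad
  have hΦx : Φ x ≠ 0 := fun h => hxne (by simpa using congrArg Φ.symm h)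
  obtain ⟨hsupp, hmax⟩ := hLM r (Φ x) hΦx
  set c : K := coeff μ (Φ x) with hc
  have hcne : c ≠ 0 := by rw [hc, ← hlmx]; exact mem_support_iff.mp hsupp
  -- common step: given `x'` with `P x' → P x`, small supports, derive contradiction
  have key : ∀ x' : A, (P x' → P x) →
      (∀ m ∈ (Φ x').support, r.1 m μ ∧ m ≠ μ) → False := by
    intro x' hPP hsmall
    have hPx' : ¬ P x' := fun h => hPx (hPP h)
    have hx'ne : x' ≠ 0 := fun h => hPx' (hP0 x' h)
    have hΦx' : Φ x' ≠ 0 := fun h => hx'ne (by simpa using congrArg Φ.symm h)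
    obtain ⟨hsupp', _⟩ := hLM r (Φ x') hΦx'
    have hmem : LM r (Φ x') ∈ Bad := ⟨x', hPx', hx'ne, rfl⟩
    have h1 := hμmin _ hmem
    obtain ⟨h2, h3⟩ := hsmall _ hsupp'
    exact h3 (r.2.1 _ _ h2 h1)
  by_cases hred : RedM K A t Φ LM r L μ
  · -- reducible case
    obtain ⟨g, hgL, hgne, hgle⟩ := hred
    obtain ⟨ν, hν⟩ := le_iff_exists_add.mp hgle
    have hmono : (monomial ν (1 : K)) ≠ 0 := by
      intro h
      have := congrArg (coeff ν) h
      simp at this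
    set n : A := Φ.symm (monomial ν (1 : K)) with hn
    have hnne : n ≠ 0 := by
      intro h; apply hmono
      rw [← Φ.apply_symm_apply (monomial ν (1 : K)), ← hn, h, map_zero]
    have hng : n * g ∈ L := by
      have := L.smul_mem n hgL
      rwa [smul_eq_mul] at this
    have hngne : n * g ≠ 0 := hmult.1 n g hnne hgne
    have hΦg : Φ g ≠ 0 := fun h => hgne (by simpa using congrArg Φ.symm h)
    have hΦng : Φ (n * g) ≠ 0 := fun h => hngne (by simpa using congrArg Φ.symm h)
    have hLMn : LM r (Φ n) = ν := by
      have h1 : Φ n = monomial ν (1 : K) := by simp [hn]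
      rw [h1]
      have h2 := (hLM r (monomial ν (1 : K)) hmono).1
      rwa [support_monomial, if_neg one_ne_zero, Finset.mem_singleton] at h2
    have hlmng : LM r (Φ (n * g)) = μ := by
      rw [hmult.2 r hrT n g hnne hgne, hLMn, hν, add_comm]
    set c' : K := coeff μ (Φ (n * g)) with hc'
    have hc'ne : c' ≠ 0 := by
      rw [hc', ← hlmng]
      exact mem_support_iff.mp (hLM r (Φ (n * g)) hΦng).1
    set x' : A := x - (c / c') • (n * g) with hx'
    have hΦx'eq : Φ x' = Φ x - (c / c') • Φ (n * g) := by
      rw [hx', map_sub, map_smul]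
    refine key x' ?_ ?_
    · rintro ⟨l, hl, b, hxb, hb⟩
      refine ⟨(c / c') • (n * g) + l, ?_, b, ?_, hb⟩
      · refine L.add_mem ?_ hl
        rw [Algebra.smul_def, ← smul_eq_mul]
        exact L.smul_mem _ hng
      · rw [add_assoc, ← hxb, hx']; abel
    · intro m hm
      have hcoeffμ : coeff μ (Φ x') = 0 := by
        rw [hΦx'eq, coeff_sub, coeff_smul, ← hc, ← hc', smul_eq_mul,
          div_mul_cancel₀ c hc'ne, sub_self]
      have hmne : m ≠ μ := by
        intro h; rw [h] at hm; exact (mem_support_iff.mp hm) hcoeffμ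
      refine ⟨?_, hmne⟩
      have hcoeff : coeff m (Φ x') ≠ 0 := mem_support_iff.mp hm
      rw [hΦx'eq, coeff_sub, coeff_smul] at hcoeff
      by_cases h1 : coeff m (Φ x) ≠ 0
      · have := hmax m (mem_support_iff.mpr h1)
        rwa [hlmx] at this
      · push_neg at h1
        rw [h1, zero_sub, neg_ne_zero, smul_eq_mul] at hcoeff
        have h2 : coeff m (Φ (n * g)) ≠ 0 := right_ne_zero_of_mul hcoeff
        have := (hLM r (Φ (n * g)) hΦng).2 m (mem_support_iff.mpr h2)
        rwa [hlmng] at this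
  · -- irreducible case
    set x' : A := x - Φ.symm (monomial μ c) with hx'
    have hΦx'eq : Φ x' = Φ x - monomial μ c := by rw [hx', map_sub]; simp
    refine key x' ?_ ?_
    · rintro ⟨l, hl, b, hxb, hb⟩
      refine ⟨l, hl, b + Φ.symm (monomial μ c), ?_, ?_⟩
      · rw [← add_assoc, ← hxb, hx']; abel
      · intro m hm
        rw [map_add] at hm
        have hm' := MvPolynomial.support_add hm
        simp only [Finset.mem_union] at hm'
        rcases hm' with hm' | hm'
        · exact hb m hm'
        · have : Φ (Φ.symm (monomial μ c)) = monomial μ c := by simp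
          rw [this, support_monomial, if_neg hcne, Finset.mem_singleton] at hm'
          rw [hm']
          exact hred
    · intro m hm
      have hcoeffμ : coeff μ (Φ x') = 0 := by
        rw [hΦx'eq, coeff_sub, coeff_monomial, if_pos rfl, ← hc, sub_self]
      have hmne : m ≠ μ := by
        intro h; rw [h] at hm; exact (mem_support_iff.mp hm) hcoeffμ
      refine ⟨?_, hmne⟩
      have hcoeff : coeff m (Φ x') ≠ 0 := mem_support_iff.mp hm
      rw [hΦx'eq, coeff_sub, coeff_monomial, if_neg (fun h => hmne h.symm), sub_zero] at hcoeff
      have := hmax m (mem_support_iff.mpr hcoeff)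
      rwa [hlmx] at this

variable {K A t Φ LM r L} in
/-- Every reducible monomial is the leading monomial of an element of `L`. -/
lemma exists_LM_eq (hLM : IsLM K t LM) {T : Set (TO (Mon t))}
    (hmult : MultOn K A t Φ LM T) (hrT : r ∈ T) {m : Mon t}
    (hred : RedM K A t Φ LM r L m) : ∃ g' ∈ L, g' ≠ 0 ∧ LM r (Φ g') = m := by
  classical
  obtain ⟨g, hgL, hgne, hgle⟩ := hred
  obtain ⟨ν, hν⟩ := le_iff_exists_add.mp hgle
  have hmono : (monomial ν (1 : K)) ≠ 0 := by
    intro h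
    have := congrArg (coeff ν) h
    simp at this
  set n : A := Φ.symm (monomial ν (1 : K)) with hn
  have hnne : n ≠ 0 := by
    intro h; apply hmono
    rw [← Φ.apply_symm_apply (monomial ν (1 : K)), ← hn, h, map_zero]
  have hng : n * g ∈ L := by
    have := L.smul_mem n hgL
    rwa [smul_eq_mul] at this
  have hngne : n * g ≠ 0 := hmult.1 n g hnne hgne
  have hLMn : LM r (Φ n) = ν := by
    have h1 : Φ n = monomial ν (1 : K) := by simp [hn]
    rw [h1]
    have h2 := (hLM r (monomial ν (1 : K)) hmono).1
    rwa [support_monomial, if_neg one_ne_zero, Finset.mem_singleton] at h2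
  refine ⟨n * g, hng, hngne, ?_⟩
  rw [hmult.2 r hrT n g hnne hgne, hLMn, hν, add_comm]

variable {K A t Φ LM L} in
/-- Comparable leading monomial ideals are equal. -/
lemma LMAideal_eq_of_le (hLM : IsLM K t LM) {T : Set (TO (Mon t))}
    (hmult : MultOn K A t Φ LM T) {r r' : TO (Mon t)}
    (hrT : r ∈ T) (hWO : IsWO r)
    (hle : LMAideal K A t Φ LM r' (L : Set A) ≤ LMAideal K A t Φ LM r (L : Set A)) :
    LMAideal K A t Φ LM r' (L : Set A) = LMAideal K A t Φ LM r (L : Set A) := by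
  classical
  have h1 : ∀ m, RedM K A t Φ LM r' L m → RedM K A t Φ LM r L m := by
    rintro m ⟨g, hg, hgne, hle'⟩
    have hmem : (monomial (LM r' (Φ g)) (1 : K)) ∈ LMAideal K A t Φ LM r' (L : Set A) := by
      rw [mem_LMAideal_iff]
      intro μ hμ
      rw [support_monomial, if_neg one_ne_zero, Finset.mem_singleton] at hμ
      subst hμ
      exact ⟨g, hg, hgne, le_refl _⟩
    have hmem2 := hle hmem
    rw [mem_LMAideal_iff] at hmem2
    have hs : LM r' (Φ g) ∈ (monomial (LM r' (Φ g)) (1 : K)).support := by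
      rw [support_monomial, if_neg one_ne_zero, Finset.mem_singleton]
    exact redM_mono (hmem2 _ hs) hle'
  have h2 : ∀ m, RedM K A t Φ LM r L m → RedM K A t Φ LM r' L m := by
    intro m hm
    by_contra hnred
    obtain ⟨g', hg'L, hg'ne, hlm⟩ := exists_LM_eq hLM hmult hrT hm
    set x : A := Φ.symm (monomial m (1 : K)) with hx
    obtain ⟨l, hl, b, hxb, hb⟩ := reduce hLM hmult hrT hWO x
    by_cases hl0 : l = 0
    · -- x = b, so m is irreducible, contradiction
      rw [hl0, zero_add] at hxb
      have : m ∈ (Φ b).support := by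
        rw [← hxb, hx]
        simp only [LinearEquiv.apply_symm_apply]
        rw [support_monomial, if_neg one_ne_zero, Finset.mem_singleton]
      exact hb m this ⟨g', hg'L, hg'ne, hlm.le⟩
    · have hΦl : Φ l ≠ 0 := fun h => hl0 (by simpa using congrArg Φ.symm h)
      have hredl : RedM K A t Φ LM r' L (LM r' (Φ l)) := ⟨l, hl, hl0, le_refl _⟩
      have hlsupp := (hLM r' (Φ l) hΦl).1
      have hΦleq : Φ l = monomial m (1 : K) - Φ b := by
        have : l = x - b := by rw [hxb]; abel
        rw [this, map_sub, hx]
        simp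
      set μ : Mon t := LM r' (Φ l) with hμ
      have hcoeff : coeff μ (Φ l) ≠ 0 := mem_support_iff.mp hlsupp
      rw [hΦleq, coeff_sub] at hcoeff
      by_cases hLMm : μ = m
      · exact hnred (hLMm ▸ hredl)
      · rw [coeff_monomial, if_neg (fun h => hLMm h.symm), zero_sub, neg_ne_zero] at hcoeff
        exact hb _ (mem_support_iff.mpr hcoeff) (h1 _ hredl)
  ext p
  rw [mem_LMAideal_iff, mem_LMAideal_iff]
  exact forall₂_congr fun m _ => ⟨h1 m, h2 m⟩

/-- In a Noetherian ring, the span of any set equals the span of a finite subset. -/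
lemma span_finset_of_noetherian {R : Type*} [CommRing R] [IsNoetherianRing R] (G : Set R) :
    ∃ F : Finset R, ↑F ⊆ G ∧ Ideal.span (F : Set R) = Ideal.span G := by
  classical
  have hN : IsNoetherian R R := by rwa [isNoetherianRing_iff] at ‹IsNoetherianRing R›
  set 𝒜 : Set (Ideal R) := {I | ∃ F : Finset R, ↑F ⊆ G ∧ Ideal.span (F : Set R) = I} with h𝒜
  obtain ⟨I, ⟨F, hFG, hFI⟩, hmax⟩ :=
    (set_has_maximal_iff_noetherian.mpr hN) 𝒜 ⟨Ideal.span ∅, ∅, by simp, by simp⟩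
  refine ⟨F, hFG, ?_⟩
  rw [hFI]
  refine le_antisymm (hFI ▸ Ideal.span_mono hFG) (Ideal.span_le.mpr fun x hx => ?_)
  have hJ : Ideal.span (insert x (F : Set R)) ∈ 𝒜 :=
    ⟨insert x F, by rw [Finset.coe_insert]; exact Set.insert_subset hx hFG,
      by rw [Finset.coe_insert]⟩
  have hle : I ≤ Ideal.span (insert x (F : Set R)) := by
    rw [← hFI]; exact Ideal.span_mono (Set.subset_insert _ _)
  have : Ideal.span (insert x (F : Set R)) ≤ I :=
    le_of_eq (((lt_or_eq_of_le hle).resolve_left (hmax _ hJ)).symm)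
  exact this (Ideal.subset_span (Set.mem_insert _ _))

variable {K A t Φ LM L} in
/-- Locally around `r` (in the Bool-function model), the leading monomial ideal is constant on `T`. -/
lemma exists_nbhd (hLM : IsLM K t LM) {T : Set (TO (Mon t))}
    (hTWO : ∀ r ∈ T, IsWO r) (hmult : MultOn K A t Φ LM T) {r : TO (Mon t)} (hrT : r ∈ T) :
    ∃ W : Set (Mon t × Mon t → Bool), IsOpen W ∧ toBoolFun r ∈ W ∧
      ∀ r'' ∈ T, toBoolFun r'' ∈ W →
        LMAideal K A t Φ LM r'' (L : Set A) = LMAideal K A t Φ LM r (L : Set A) := by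
  classical
  obtain ⟨F, hFsub, hFspan⟩ := span_finset_of_noetherian
    ((fun s => monomial s (1 : K)) '' {s | ∃ h ∈ L, h ≠ 0 ∧ s = LM r (Φ h)})
  have hgen : ∀ q ∈ F, ∃ gq : A, gq ∈ L ∧ gq ≠ 0 ∧ q = monomial (LM r (Φ gq)) (1 : K) := by
    intro q hq
    obtain ⟨s, ⟨h, hh, hne, rfl⟩, rfl⟩ := hFsub hq
    exact ⟨h, hh, hne, rfl⟩
  choose! g hgL hgne hgq using hgen
  set W : Set (Mon t × Mon t → Bool) :=
    ⋂ q ∈ F, ⋂ m ∈ (Φ (g q)).support, {e | e (m, LM r (Φ (g q))) = true} with hW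
  have hWo : IsOpen W := by
    refine isOpen_biInter_finset fun q _ => isOpen_biInter_finset fun m _ => ?_
    have : {e : Mon t × Mon t → Bool | e (m, LM r (Φ (g q))) = true} =
        (fun e : Mon t × Mon t → Bool => e (m, LM r (Φ (g q)))) ⁻¹' {true} := rfl
    rw [this]
    exact (continuous_apply (m, LM r (Φ (g q)))).isOpen_preimage _ (isOpen_discrete _)
  have hΦg : ∀ q ∈ F, Φ (g q) ≠ 0 := fun q hq h =>
    hgne q hq (by simpa using congrArg Φ.symm h)
  have hrW : toBoolFun r ∈ W := by
    rw [hW]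
    simp only [Set.mem_iInter, Set.mem_setOf_eq]
    intro q hq m hm
    rw [toBoolFun_eq_true_iff]
    exact (hLM r (Φ (g q)) (hΦg q hq)).2 m hm
  refine ⟨W, hWo, hrW, fun r'' hr''T hr''W => ?_⟩
  have hLMeq : ∀ q ∈ F, LM r'' (Φ (g q)) = LM r (Φ (g q)) := by
    intro q hq
    rw [hW] at hr''W
    simp only [Set.mem_iInter, Set.mem_setOf_eq] at hr''W
    obtain ⟨hsupp'', hmax''⟩ := hLM r'' (Φ (g q)) (hΦg q hq)
    have h1 : r''.1 (LM r'' (Φ (g q))) (LM r (Φ (g q))) :=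
      (toBoolFun_eq_true_iff r'' _).mp (hr''W q hq _ hsupp'')
    have h2 : r''.1 (LM r (Φ (g q))) (LM r'' (Φ (g q))) :=
      hmax'' _ (hLM r (Φ (g q)) (hΦg q hq)).1
    exact r''.2.1 _ _ h1 h2
  have hspanF : LMAideal K A t Φ LM r (L : Set A) = Ideal.span (F : Set _) := by
    rw [LMAideal_eq_span, ← hFspan]
  have hle : LMAideal K A t Φ LM r (L : Set A) ≤ LMAideal K A t Φ LM r'' (L : Set A) := by
    rw [hspanF, Ideal.span_le]
    intro q hq
    have : q = monomial (LM r'' (Φ (g q))) (1 : K) := by rw [hLMeq q hq]; exact hgq q hq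
    rw [this]
    exact Ideal.subset_span ⟨g q, hgL q hq, hgne q hq, rfl⟩
  exact (LMAideal_eq_of_le hLM hmult hr''T (hTWO r'' hr''T) hle).symm

end Alg


/-- Let `𝔗` be a set of total well-orderings on `N` that is closed in `TO(N)`, assume `A` is
multiplicative on `𝔗`, and let `L` be a left ideal of `A`. Then every leading monomial ideal of
`L` from `𝔗` is minimal among them with respect to inclusion, and `L` admits at most finitely
many distinct leading monomial ideals from `𝔗`. -/
theorem LMAideals_minimal_and_finite (K A : Type*) [Field K] [Ring A] [Algebra K A]
    (t : ℕ) (ht : 1 ≤ t)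
    (Φ : A ≃ₗ[K] MvPolynomial (Fin t) K)
    (LM : TO (Mon t) → MvPolynomial (Fin t) K → Mon t) (hLM : IsLM K t LM)
    (T : Set (TO (Mon t))) (hTWO : ∀ r ∈ T, IsWO r) (hTclosed : IsClosed T)
    (hmult : MultOn K A t Φ LM T)
    (L : Submodule A A) :
    (∀ r ∈ T, ∀ r' ∈ T,
      LMAideal K A t Φ LM r' (L : Set A) ≤ LMAideal K A t Φ LM r (L : Set A) →
      LMAideal K A t Φ LM r' (L : Set A) = LMAideal K A t Φ LM r (L : Set A)) ∧
    {I : Ideal (MvPolynomial (Fin t) K) | ∃ r ∈ T, I = LMAideal K A t Φ LM r (L : Set A)}.Finite := by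
  classical
  constructor
  · intro r hr r' hr' hle
    exact LMAideal_eq_of_le hLM hmult hr (hTWO r hr) hle
  · choose W hWo hWmem hWloc using
      (fun x : T => exists_nbhd (L := L) hLM hTWO hmult x.2)
    have hcover : toBoolFun '' T ⊆ ⋃ x : T, W x := by
      rintro e ⟨r, hr, rfl⟩
      exact Set.mem_iUnion.mpr ⟨⟨r, hr⟩, hWmem ⟨r, hr⟩⟩
    obtain ⟨s, hs⟩ := (isCompact_image_toBoolFun hTclosed).elim_finite_subcover
      (fun x : T => W x) (fun x => hWo x) hcover
    refine Set.Finite.subset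
      (s.finite_toSet.image (fun x : T => LMAideal K A t Φ LM x.1 (L : Set A))) ?_
    rintro I ⟨r, hrT, rfl⟩
    have hmem : toBoolFun r ∈ ⋃ x ∈ s, W x := hs ⟨r, hrT, rfl⟩
    rw [Set.mem_iUnion₂] at hmem
    obtain ⟨x, hxs, hxW⟩ := hmem
    exact ⟨x, hxs, (hWloc x r hrT hxW).symm⟩
end
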